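/- arXiv:2603.22204 — 2 statements merged into one kernel-verified Lean document; each statement's English description precedes it below -/
import Mathlib

section
/- Let B be a k-ply finite family of n closed balls in ℝ^d (d ≥ 1). Then the intersection graph G(B) has at most 3^d · k · n edges. -/
open Metric SimpleGraph

/-- The intersection graph of a family of sets: distinct indices `i, j` are adjacent
iff `S i` and `S j` intersect. -/
def interGraph {V α : Type*} (S : V → Set α) : SimpleGraph V where
  Adj i j := i ≠ j ∧ (S i ∩ S j).Nonempty
  symm := by
    constructor
    rintro i j ⟨hij, x, hx1, hx2⟩
    exact ⟨hij.symm, x, hx2, hx1⟩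
  loopless := by
    constructor
    rintro i ⟨h, -⟩
    exact h rfl

/-- `X` is a `c`-balanced separator of `G`: every connected component of the induced
subgraph on the complement of `X` has at most `c * |V|` vertices. -/
def IsCBalSep {V : Type*} (G : SimpleGraph V) (c : ℝ) (X : Set V) : Prop :=
  ∀ v : ↥(Xᶜ), (Nat.card {w : ↥(Xᶜ) // (G.induce (Xᶜ)).Reachable v w} : ℝ) ≤ c * (Nat.card V : ℝ)

/-- A balanced separator: every connected component of the induced subgraph on the
complement of `X` has at most `(2/3) * |V|` vertices. -/
def IsBalancedSep {V : Type*} (G : SimpleGraph V) (X : Set V) : Prop :=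
  IsCBalSep G (2/3) X

/-- A closed ball in `ℝ^d` with positive radius. -/
def IsClosedBallIn (d : ℕ) (S : Set (EuclideanSpace ℝ (Fin d))) : Prop :=
  ∃ (c : EuclideanSpace ℝ (Fin d)) (r : ℝ), 0 < r ∧ S = Metric.closedBall c r

/-- Geometric lemma: if two closed balls intersect and `ri ≤ rj`, then the larger ball
contains a ball of radius `ri` whose center is within `2 ri` of `ci`. -/
lemma exists_subball {E : Type*} [NormedAddCommGroup E] [NormedSpace ℝ E]
    (ci cj x : E) (ri rj : ℝ) (hri : 0 < ri) (hij : ri ≤ rj)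
    (hxi : x ∈ closedBall ci ri) (hxj : x ∈ closedBall cj rj) :
    ∃ c', closedBall c' ri ⊆ closedBall cj rj ∧ closedBall c' ri ⊆ closedBall ci (3 * ri) := by
  rw [mem_closedBall] at hxi hxj
  set D := dist x cj with hD
  by_cases hcase : D ≤ ri
  · refine ⟨cj, closedBall_subset_closedBall hij, closedBall_subset_closedBall' ?_⟩
    have : dist cj ci ≤ D + ri := by
      have := dist_triangle cj x ci
      rw [dist_comm cj x] at this
      linarith [hxi, this]
    linarith
  · push_neg at hcase
    have hD0 : 0 < D := lt_trans hri hcase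
    set t : ℝ := ri / D with ht
    have ht0 : 0 < t := div_pos hri hD0
    have ht1 : t < 1 := (div_lt_one hD0).mpr hcase
    refine ⟨x + t • (cj - x), ?_, ?_⟩
    · apply closedBall_subset_closedBall'
      have h1 : dist (x + t • (cj - x)) cj = (1 - t) * D := by
        rw [dist_eq_norm]
        have : x + t • (cj - x) - cj = (1 - t) • (x - cj) := by
          rw [sub_smul, one_smul, smul_sub, smul_sub]; abel
        rw [this, norm_smul, Real.norm_eq_abs, abs_of_nonneg (by linarith)]
        rw [hD, dist_eq_norm]
      have : (1 - t) * D = D - ri := by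
        rw [ht, sub_mul, one_mul, div_mul_cancel₀ _ hD0.ne']
      rw [h1, this]
      linarith [hxj]
    · apply closedBall_subset_closedBall'
      have h2 : dist (x + t • (cj - x)) x = ri := by
        rw [dist_eq_norm, add_sub_cancel_left, norm_smul, Real.norm_eq_abs,
          abs_of_nonneg ht0.le]
        have : ‖cj - x‖ = D := by rw [hD, dist_eq_norm, norm_sub_rev]
        rw [this, ht]
        field_simp
      have := dist_triangle (x + t • (cj - x)) x ci
      rw [h2] at this
      linarith [hxi, this]

open MeasureTheory in
/-- Packing lemma: at most `3^d * k` balls of radius `r` can fit in a `k`-ply way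
inside a ball of radius `3r`. -/
lemma packing_bound {d : ℕ} {k : ℕ} {ι : Type*} (T : Finset ι)
    (c : ι → EuclideanSpace ℝ (Fin d)) (c₀ : EuclideanSpace ℝ (Fin d)) (r : ℝ) (hr : 0 < r)
    (hsub : ∀ j ∈ T, closedBall (c j) r ⊆ closedBall c₀ (3 * r))
    (hply : ∀ x : EuclideanSpace ℝ (Fin d),
      {j | j ∈ T ∧ x ∈ closedBall (c j) r}.ncard ≤ k) :
    T.card ≤ 3 ^ d * k := by
  classical
  set μ : Measure (EuclideanSpace ℝ (Fin d)) := volume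
  have hmeas : ∀ j : ι, Measurable fun x => (closedBall (c j) r).indicator
      (fun _ => (1 : ENNReal)) x :=
    fun j => measurable_const.indicator measurableSet_closedBall
  have key : ∑ j ∈ T, μ (closedBall (c j) r) ≤ (k : ENNReal) * μ (closedBall c₀ (3 * r)) := by
    have h1 : ∑ j ∈ T, μ (closedBall (c j) r)
        = ∫⁻ x, ∑ j ∈ T, (closedBall (c j) r).indicator (fun _ => (1 : ENNReal)) x ∂μ := by
      rw [lintegral_finset_sum _ (fun j _ => hmeas j)]
      refine Finset.sum_congr rfl fun j _ => ?_
      rw [lintegral_indicator_const measurableSet_closedBall, one_mul]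
    have h2 : (∫⁻ x, (closedBall c₀ (3 * r)).indicator (fun _ => (k : ENNReal)) x ∂μ)
        = (k : ENNReal) * μ (closedBall c₀ (3 * r)) :=
      lintegral_indicator_const measurableSet_closedBall _
    rw [h1, ← h2]
    apply lintegral_mono
    intro x
    dsimp only
    by_cases hx : x ∈ closedBall c₀ (3 * r)
    · rw [Set.indicator_of_mem hx]
      calc ∑ j ∈ T, (closedBall (c j) r).indicator (fun _ => (1 : ENNReal)) x
          = ∑ j ∈ T.filter (fun j => x ∈ closedBall (c j) r), 1 := by
            rw [Finset.sum_filter]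
            refine Finset.sum_congr rfl fun j _ => ?_
            by_cases h : x ∈ closedBall (c j) r <;> simp [h, Set.indicator_apply]
        _ = ((T.filter (fun j => x ∈ closedBall (c j) r)).card : ENNReal) := by
            simp
        _ ≤ (k : ENNReal) := by
            have hcard : (T.filter (fun j => x ∈ closedBall (c j) r)).card
                = {j | j ∈ T ∧ x ∈ closedBall (c j) r}.ncard := by
              rw [← Set.ncard_coe_finset]
              congr 1
              ext j
              simp
            rw [hcard]
            exact_mod_cast hply x
    · rw [Set.indicator_of_notMem hx]
      have : ∀ j ∈ T, (closedBall (c j) r).indicator (fun _ => (1 : ENNReal)) x = 0 := by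
        intro j hj
        exact Set.indicator_of_notMem (fun hmem => hx (hsub j hj hmem)) _
      rw [Finset.sum_eq_zero this]
  -- compute volumes
  have hdim : Module.finrank ℝ (EuclideanSpace ℝ (Fin d)) = d := by
    simp [finrank_euclideanSpace]
  have hvol : ∀ x : EuclideanSpace ℝ (Fin d), ∀ s : ℝ, 0 ≤ s →
      μ (closedBall x s) = ENNReal.ofReal (s ^ d) * μ (closedBall 0 1) := by
    intro x s hs
    rw [Measure.addHaar_closedBall' μ x hs, hdim]
  set U : ENNReal := μ (closedBall (0 : EuclideanSpace ℝ (Fin d)) 1) with hU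
  have hUpos : U ≠ 0 := (measure_closedBall_pos μ _ one_pos).ne'
  have hUtop : U ≠ ⊤ := measure_closedBall_lt_top.ne
  have hsum : ∑ j ∈ T, μ (closedBall (c j) r)
      = (T.card : ENNReal) * (ENNReal.ofReal (r ^ d) * U) := by
    rw [Finset.sum_congr rfl (fun j _ => hvol (c j) r hr.le), Finset.sum_const,
      nsmul_eq_mul]
  have hbig : μ (closedBall c₀ (3 * r))
      = ((3 ^ d : ℕ) : ENNReal) * (ENNReal.ofReal (r ^ d) * U) := by
    rw [hvol c₀ (3 * r) (by positivity), mul_pow, ENNReal.ofReal_mul (by positivity)]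
    have : ENNReal.ofReal ((3 : ℝ) ^ d) = ((3 ^ d : ℕ) : ENNReal) := by
      rw [show ((3 : ℝ) ^ d) = (((3 ^ d : ℕ) : ℝ)) by push_cast; ring,
        ENNReal.ofReal_natCast]
    rw [this, mul_assoc]
  rw [hsum, hbig] at key
  have hc : ENNReal.ofReal (r ^ d) * U ≠ 0 := by
    apply mul_ne_zero _ hUpos
    simp [ENNReal.ofReal_eq_zero, not_le]
    positivity
  have hctop : ENNReal.ofReal (r ^ d) * U ≠ ⊤ :=
    ENNReal.mul_ne_top ENNReal.ofReal_ne_top hUtop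
  have key' : (T.card : ENNReal) * (ENNReal.ofReal (r ^ d) * U)
      ≤ ((3 ^ d * k : ℕ) : ENNReal) * (ENNReal.ofReal (r ^ d) * U) := by
    calc (T.card : ENNReal) * (ENNReal.ofReal (r ^ d) * U)
        ≤ (k : ENNReal) * (((3 ^ d : ℕ) : ENNReal) * (ENNReal.ofReal (r ^ d) * U)) := key
      _ = ((3 ^ d * k : ℕ) : ENNReal) * (ENNReal.ofReal (r ^ d) * U) := by
          push_cast; ring
  have hfin : (T.card : ENNReal) ≤ ((3 ^ d * k : ℕ) : ENNReal) :=
    (ENNReal.mul_le_mul_iff_left hc hctop).mp key'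
  exact_mod_cast hfin

/-- A `k`-ply intersection graph of `n` balls in `ℝ^d` has at most `3^d * k * n` edges. -/
theorem ball_kply_edge_bound (d : ℕ) (hd : 1 ≤ d) (n k : ℕ)
    (B : Fin n → Set (EuclideanSpace ℝ (Fin d)))
    (hball : ∀ i, IsClosedBallIn d (B i))
    (hply : ∀ x : EuclideanSpace ℝ (Fin d), Set.ncard {j | x ∈ B j} ≤ k) :
    (interGraph B).edgeSet.ncard ≤ 3 ^ d * k * n := by
  classical
  choose c r hr hB using hball
  set G := interGraph B with hG
  set key : Fin n → Lex (ℝ × Fin n) := fun i => toLex (r i, i) with hkey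
  have keyinj : Function.Injective key := by
    intro a b h
    have : (r a, a) = (r b, b) := toLex_inj.mp h
    exact (Prod.mk.injEq _ _ _ _).mp this |>.2
  have key_le_r : ∀ a b : Fin n, key a ≤ key b → r a ≤ r b := by
    intro a b h
    rcases Prod.Lex.le_iff.mp h with h1 | ⟨h1, _⟩
    · exact le_of_lt h1
    · exact le_of_eq h1
  set fib : Fin n → Finset (Fin n) :=
    fun i => Finset.univ.filter (fun j => G.Adj i j ∧ key i ≤ key j) with hfib
  -- fiber bound
  have fib_bound : ∀ i, (fib i).card ≤ 3 ^ d * k := by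
    intro i
    have hc' : ∀ j : Fin n, ∃ c', j ∈ fib i →
        closedBall c' (r i) ⊆ B j ∧ closedBall c' (r i) ⊆ closedBall (c i) (3 * r i) := by
      intro j
      by_cases hj : j ∈ fib i
      · rw [hfib, Finset.mem_filter] at hj
        obtain ⟨-, ⟨hne, x, hx1, hx2⟩, hkle⟩ := hj
        rw [hB i, mem_closedBall] at hx1
        rw [hB j, mem_closedBall] at hx2
        obtain ⟨c', h1, h2⟩ := exists_subball (c i) (c j) x (r i) (r j) (hr i)
          (key_le_r i j hkle) hx1 hx2
        exact ⟨c', fun _ => ⟨by rw [hB j]; exact h1, h2⟩⟩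
      · exact ⟨c i, fun h => absurd h hj⟩
    choose c' hc' using hc'
    apply packing_bound (fib i) c' (c i) (r i) (hr i)
    · exact fun j hj => (hc' j hj).2
    · intro x
      have hsubset : {j | j ∈ fib i ∧ x ∈ closedBall (c' j) (r i)} ⊆ {j | x ∈ B j} :=
        fun j hj => (hc' j hj.1).1 hj.2
      calc {j | j ∈ fib i ∧ x ∈ closedBall (c' j) (r i)}.ncard
          ≤ Set.ncard {j | x ∈ B j} := Set.ncard_le_ncard hsubset (Set.toFinite _)
        _ ≤ k := hply x
  -- edge counting
  set g : Sym2 (Fin n) → Fin n × Fin n := Sym2.lift ⟨fun a b =>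
    if key a ≤ key b then (a, b) else (b, a), by
      intro a b
      dsimp only
      rcases le_or_gt (key a) (key b) with h | h
      · rcases eq_or_lt_of_le h with he | hlt
        · have : a = b := keyinj he
          subst this; simp
        · rw [if_pos h, if_neg (not_le.mpr hlt)]
      · rw [if_neg (not_le.mpr h), if_pos h.le]⟩ with hg
  have g_mk : ∀ e : Sym2 (Fin n), Sym2.mk (g e).1 (g e).2 = e := by
    intro e
    induction e using Sym2.ind with
    | _ a b =>
      rw [hg]
      by_cases h : key a ≤ key b
      · simp [h]
      · simp [h, Sym2.eq_swap]
  have ginj : Function.Injective g := by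
    intro e1 e2 h
    rw [← g_mk e1, ← g_mk e2, h]
  set D : Finset (Fin n × Fin n) :=
    Finset.univ.biUnion (fun i => (fib i).image (fun j => (i, j))) with hD
  have hfinE : G.edgeSet.Finite := Set.toFinite _
  have hmaps : ∀ e ∈ hfinE.toFinset, g e ∈ D := by
    intro e he
    rw [Set.Finite.mem_toFinset] at he
    induction e using Sym2.ind with
    | _ a b =>
      rw [SimpleGraph.mem_edgeSet] at he
      rw [hD, Finset.mem_biUnion]
      by_cases h : key a ≤ key b
      · refine ⟨a, Finset.mem_univ a, ?_⟩
        rw [Finset.mem_image]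
        refine ⟨b, ?_, by rw [hg]; simp [h]⟩
        rw [hfib, Finset.mem_filter]
        exact ⟨Finset.mem_univ b, he, h⟩
      · refine ⟨b, Finset.mem_univ b, ?_⟩
        rw [Finset.mem_image]
        refine ⟨a, ?_, by rw [hg]; simp [h]⟩
        rw [hfib, Finset.mem_filter]
        exact ⟨Finset.mem_univ a, he.symm, (not_le.mp h).le⟩
  calc G.edgeSet.ncard = hfinE.toFinset.card := Set.ncard_eq_toFinset_card _ hfinE
    _ ≤ D.card := Finset.card_le_card_of_injOn g hmaps (ginj.injOn)
    _ ≤ ∑ i : Fin n, ((fib i).image (fun j => (i, j))).card := Finset.card_biUnion_le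
    _ ≤ ∑ i : Fin n, (fib i).card := Finset.sum_le_sum (fun i _ => Finset.card_image_le)
    _ ≤ ∑ _i : Fin n, 3 ^ d * k := Finset.sum_le_sum (fun i _ => fib_bound i)
    _ = n * (3 ^ d * k) := by simp [Finset.sum_const, mul_comm]
    _ = 3 ^ d * k * n := by ring
end

section
/- For every dimension d ≥ 3, every ε > 0, and every finite simple graph G, there exists a finite family of compact connected subsets of ℝ^d, each of which is (1+ε)-fat, whose intersection graph is isomorphic to G. -/
open Metric SimpleGraph

/-- A set `B ⊆ ℝ^d` is `C`-fat: for some `r > 0`, `B` contains a closed ball of radius `r`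
and is contained in a closed ball of radius `C * r`. -/
def IsFat (d : ℕ) (C : ℝ) (B : Set (EuclideanSpace ℝ (Fin d))) : Prop :=
  ∃ r : ℝ, 0 < r ∧ (∃ c₁, Metric.closedBall c₁ r ⊆ B) ∧
    ∃ c₂, B ⊆ Metric.closedBall c₂ (C * r)


open Set


noncomputable def pt (d : ℕ) (hd : 3 ≤ d) (a b c : ℝ) : EuclideanSpace ℝ (Fin d) :=
  a • EuclideanSpace.single ⟨0, by omega⟩ 1 + b • EuclideanSpace.single ⟨1, by omega⟩ 1
    + c • EuclideanSpace.single ⟨2, by omega⟩ 1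

variable {d : ℕ} {hd : 3 ≤ d} {a b c a' b' c' : ℝ}

lemma pt_apply (i : Fin d) : pt d hd a b c i =
    if i = ⟨0, by omega⟩ then a else if i = ⟨1, by omega⟩ then b
      else if i = ⟨2, by omega⟩ then c else 0 := by
  simp only [pt, PiLp.add_apply, PiLp.smul_apply, EuclideanSpace.single_apply, smul_eq_mul]
  split_ifs with h1 h2 h3 <;> simp_all

lemma pt_inj_y : pt d hd a b c = pt d hd a' b' c' → b = b' := by
  intro h
  have := congrArg (fun p : EuclideanSpace ℝ (Fin d) => p ⟨1, by omega⟩) h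
  simpa [pt_apply] using this

lemma pt_dist : dist (pt d hd a b c) (pt d hd a' b' c') =
    Real.sqrt ((a-a')^2 + (b-b')^2 + (c-c')^2) := by
  rw [EuclideanSpace.dist_eq]
  congr 1
  have h01 : (⟨0, by omega⟩ : Fin d) ≠ ⟨1, by omega⟩ := by simp [Fin.ext_iff]
  have h02 : (⟨0, by omega⟩ : Fin d) ≠ ⟨2, by omega⟩ := by simp [Fin.ext_iff]
  have h12 : (⟨1, by omega⟩ : Fin d) ≠ ⟨2, by omega⟩ := by simp [Fin.ext_iff]
  rw [← Finset.sum_subset (s₁ := {⟨0, by omega⟩, ⟨1, by omega⟩, ⟨2, by omega⟩})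
      (Finset.subset_univ _) ?_]
  · rw [Finset.sum_insert (by simp [h01, h02]), Finset.sum_insert (by simp [h12]),
      Finset.sum_singleton]
    simp [pt_apply, h01.symm, h02.symm, h12.symm, Real.dist_eq, sq_abs]; ring
  · intro i _ hi
    simp only [Finset.mem_insert, Finset.mem_singleton, not_or] at hi
    simp [pt_apply, hi.1, hi.2.1, hi.2.2, Real.dist_eq]

lemma pt_dist_le : dist (pt d hd a b c) (pt d hd a' b' c') ≤ |a-a'| + |b-b'| + |c-c'| := by
  rw [pt_dist]
  have h := Real.sqrt_le_sqrt (show (a-a')^2 + (b-b')^2 + (c-c')^2 ≤ (|a-a'| + |b-b'| + |c-c'|)^2 by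
    have := abs_nonneg (a-a'); have := abs_nonneg (b-b'); have := abs_nonneg (c-c')
    nlinarith [sq_abs (a-a'), sq_abs (b-b'), sq_abs (c-c')])
  calc Real.sqrt ((a-a')^2 + (b-b')^2 + (c-c')^2) ≤ Real.sqrt ((|a-a'| + |b-b'| + |c-c'|)^2) := h
    _ = |a-a'| + |b-b'| + |c-c'| := Real.sqrt_sq (by positivity)

lemma pt_dist_ge_x : |a - a'| ≤ dist (pt d hd a b c) (pt d hd a' b' c') := by
  rw [pt_dist, ← Real.sqrt_sq_eq_abs]
  exact Real.sqrt_le_sqrt (by nlinarith [sq_nonneg (b-b'), sq_nonneg (c-c')])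

lemma pt_dist_ge_z : |c - c'| ≤ dist (pt d hd a b c) (pt d hd a' b' c') := by
  rw [pt_dist, ← Real.sqrt_sq_eq_abs]
  exact Real.sqrt_le_sqrt (by nlinarith [sq_nonneg (b-b'), sq_nonneg (a-a')])

/-- radius scale -/
noncomputable def rr (t : ℝ) (m : ℕ) : ℝ := t ^ (m + 1)

/-- x-positions of the ball centers -/
noncomputable def xp (t : ℝ) : ℕ → ℝ
  | 0 => 0
  | m + 1 => xp t m + rr t m + 2 * rr t (m + 1)

variable {t : ℝ}

lemma rr_pos (ht0 : 0 < t) (m : ℕ) : 0 < rr t m := pow_pos ht0 _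

lemma rr_anti (ht0 : 0 < t) (ht1 : t ≤ 1) {m m' : ℕ} (h : m ≤ m') : rr t m' ≤ rr t m :=
  pow_le_pow_of_le_one ht0.le ht1 (by omega)

lemma rr_succ (m : ℕ) : rr t (m + 1) = t * rr t m := by
  simp [rr, pow_succ]; ring

lemma xp_gap (ht0 : 0 < t) {a b : ℕ} (h : a < b) :
    xp t a + rr t a + 2 * rr t b ≤ xp t b := by
  induction b with
  | zero => omega
  | succ n ih =>
    rcases Nat.lt_succ_iff_lt_or_eq.mp h with h' | h'
    · have := ih h'
      have h1 : 0 < rr t n := rr_pos ht0 n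
      simp only [xp]
      nlinarith [rr_pos ht0 (n+1)]
    · subst h'; simp only [xp]; nlinarith [rr_pos ht0 (a+1)]

lemma xp_mono (ht0 : 0 < t) {a b : ℕ} (h : a ≤ b) : xp t a ≤ xp t b := by
  rcases Nat.eq_or_lt_of_le h with rfl | h'
  · exact le_refl _
  · nlinarith [xp_gap ht0 h', rr_pos ht0 a, rr_pos ht0 b]

lemma xp_le (ht0 : 0 < t) (ht1 : t ≤ 1/12) {a b : ℕ} (h : a ≤ b) :
    xp t b ≤ xp t a + ((1 + 2*t)/(1-t)) * (rr t a - rr t b) := by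
  induction b with
  | zero =>
    have : a = 0 := by omega
    subst this; simp
  | succ n ih =>
    rcases Nat.lt_succ_iff_lt_or_eq.mp (Nat.lt_succ_of_le h) with h' | h'
    · have hih := ih (by omega)
      have key : (1 + 2*t) * rr t n = ((1 + 2*t)/(1-t)) * (rr t n - rr t (n+1)) := by
        have hne : (1:ℝ) - t ≠ 0 := by nlinarith
        rw [rr_succ]
        field_simp
      simp only [xp]
      have h2 : rr t n + 2 * rr t (n+1) = (1+2*t) * rr t n := by rw [rr_succ]; ring
      nlinarith [hih, key, h2]
    · subst h'
      simp

lemma xp_sub_le (ht0 : 0 < t) (ht1 : t ≤ 1/12) {a b : ℕ} (h : a ≤ b) :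
    xp t b - xp t a ≤ rr t a * (1 + 4*t) := by
  have h1 := xp_le ht0 ht1 h
  have hK : (1 + 2*t)/(1-t) ≤ 1 + 4*t := by
    rw [div_le_iff₀ (by nlinarith)]
    nlinarith
  have hrb : 0 < rr t b := rr_pos ht0 b
  have hra : 0 < rr t a := rr_pos ht0 a
  have h2 : rr t a - rr t b ≤ rr t a := by nlinarith
  have h3 : (0:ℝ) ≤ rr t a - rr t b := by
    have := rr_anti ht0 (by nlinarith) h
    nlinarith
  nlinarith [mul_le_mul_of_nonneg_right hK h3]

noncomputable def ctr (d : ℕ) (hd : 3 ≤ d) (t : ℝ) (j : ℕ) : EuclideanSpace ℝ (Fin d) :=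
  pt d hd (xp t j) 0 0

noncomputable def ten (d : ℕ) (hd : 3 ≤ d) (t y : ℝ) (j k : ℕ) :
    Set (EuclideanSpace ℝ (Fin d)) :=
  ((fun s => pt d hd s y (2 * rr t (j+1))) '' Icc (xp t j) (xp t k)) ∪
  ((fun s => pt d hd (xp t k) y s) '' Icc 0 (2 * rr t (j+1)))

lemma pt_continuous1 {y c : ℝ} : Continuous (fun s => pt d hd s y c) := by
  unfold pt; fun_prop

lemma pt_continuous3 {a y : ℝ} : Continuous (fun s => pt d hd a y s) := by
  unfold pt; fun_prop

lemma ten_compact {y : ℝ} {j k : ℕ} : IsCompact (ten d hd t y j k) :=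
  ((isCompact_Icc.image pt_continuous1)).union ((isCompact_Icc.image pt_continuous3))

lemma ctr_dist {j m : ℕ} : dist (ctr d hd t j) (ctr d hd t m) = |xp t j - xp t m| := by
  rw [ctr, ctr, pt_dist]
  simp [Real.sqrt_sq_eq_abs]

lemma ten_y {y : ℝ} {j k : ℕ} {p : EuclideanSpace ℝ (Fin d)} (hp : p ∈ ten d hd t y j k) :
    p ⟨1, by omega⟩ = y := by
  rcases hp with ⟨s, _, rfl⟩ | ⟨s, _, rfl⟩ <;>
  · show pt d hd _ _ _ _ = y
    rw [pt_apply]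
    simp [Fin.ext_iff]

lemma ball_ten_preconnected (ht0 : 0 < t) (ht1 : t ≤ 1/12) {y : ℝ} {j k : ℕ}
    (hjk : j < k) (hy0 : 0 ≤ y) (hy : y ≤ rr t (j+1)) :
    IsPreconnected (closedBall (ctr d hd t j) (rr t j) ∪ ten d hd t y j k) := by
  have hxjk : xp t j ≤ xp t k := xp_mono ht0 hjk.le
  have hr1 : 0 < rr t (j+1) := rr_pos ht0 _
  rw [ten, ← Set.union_assoc]
  apply IsPreconnected.union (pt d hd (xp t k) y (2 * rr t (j+1)))
  · exact Set.mem_union_right _ ⟨xp t k, ⟨hxjk, le_refl _⟩, rfl⟩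
  · exact ⟨2 * rr t (j+1), ⟨by positivity, le_refl _⟩, rfl⟩
  · apply IsPreconnected.union (pt d hd (xp t j) y (2 * rr t (j+1)))
    · rw [mem_closedBall]
      calc dist (pt d hd (xp t j) y (2 * rr t (j+1))) (ctr d hd t j)
          ≤ |xp t j - xp t j| + |y - 0| + |2 * rr t (j+1) - 0| := pt_dist_le
        _ = y + 2 * rr t (j+1) := by
            rw [sub_self, abs_zero, sub_zero, sub_zero, abs_of_nonneg hy0,
              abs_of_nonneg (by positivity)]
            ring
        _ ≤ 3 * rr t (j+1) := by nlinarith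
        _ ≤ rr t j := by rw [rr_succ]; nlinarith [rr_pos ht0 j]
    · exact ⟨xp t j, ⟨le_refl _, hxjk⟩, rfl⟩
    · exact (convex_closedBall _ _).isPreconnected
    · exact isPreconnected_Icc.image _ pt_continuous1.continuousOn
  · exact isPreconnected_Icc.image _ pt_continuous3.continuousOn

lemma ten_reach (ht0 : 0 < t) (ht1 : t ≤ 1/12) {y : ℝ} {j k : ℕ}
    (hjk : j < k) (hy0 : 0 ≤ y) (hy : y ≤ rr t (j+1)) {p : EuclideanSpace ℝ (Fin d)}
    (hp : p ∈ ten d hd t y j k) :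
    dist p (ctr d hd t j) ≤ rr t j * (1 + 7*t) := by
  have hxjk := xp_sub_le ht0 ht1 hjk.le
  have hr1 : rr t (j+1) = t * rr t j := rr_succ j
  have hrj : 0 < rr t j := rr_pos ht0 j
  rcases hp with ⟨s, ⟨hs1, hs2⟩, rfl⟩ | ⟨s, ⟨hs1, hs2⟩, rfl⟩
  · calc dist (pt d hd s y (2 * rr t (j+1))) (ctr d hd t j)
        ≤ |s - xp t j| + |y - 0| + |2 * rr t (j+1) - 0| := pt_dist_le
      _ = (s - xp t j) + y + 2 * rr t (j+1) := by
          rw [sub_zero, sub_zero, abs_of_nonneg (by linarith), abs_of_nonneg hy0,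
            abs_of_nonneg (by nlinarith [rr_pos ht0 (j+1)])]
      _ ≤ rr t j * (1 + 7*t) := by nlinarith
  · calc dist (pt d hd (xp t k) y s) (ctr d hd t j)
        ≤ |xp t k - xp t j| + |y - 0| + |s - 0| := pt_dist_le
      _ = (xp t k - xp t j) + y + s := by
          rw [sub_zero, sub_zero, abs_of_nonneg (by nlinarith [xp_mono ht0 hjk.le]),
            abs_of_nonneg hy0, abs_of_nonneg (by linarith)]
      _ ≤ rr t j * (1 + 7*t) := by nlinarith

lemma ten_avoid (ht0 : 0 < t) (ht1 : t ≤ 1/12) {y : ℝ} {j k m : ℕ}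
    (hjk : j < k) (hm1 : m ≠ j) (hm2 : m ≠ k) {p : EuclideanSpace ℝ (Fin d)}
    (hp : p ∈ ten d hd t y j k) :
    rr t m < dist p (ctr d hd t m) := by
  have ht1' : t ≤ 1 := by linarith
  rcases hp with ⟨s, ⟨hs1, hs2⟩, rfl⟩ | ⟨s, ⟨hs1, hs2⟩, rfl⟩
  · show rr t m < dist (pt d hd s y (2 * rr t (j+1))) (pt d hd (xp t m) 0 0)
    rcases Nat.lt_or_ge m j with hmj | hmj
    · have hgap := xp_gap ht0 hmj
      refine lt_of_lt_of_le ?_ pt_dist_ge_x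
      rw [abs_of_nonneg (by nlinarith [rr_pos ht0 m, rr_pos ht0 j])]
      nlinarith [rr_pos ht0 j]
    · have hmj' : j + 1 ≤ m := by omega
      refine lt_of_lt_of_le ?_ pt_dist_ge_z
      rw [sub_zero, abs_of_nonneg (by nlinarith [rr_pos ht0 (j+1)])]
      nlinarith [rr_anti ht0 ht1' hmj', rr_pos ht0 (j+1)]
  · show rr t m < dist (pt d hd (xp t k) y s) (pt d hd (xp t m) 0 0)
    refine lt_of_lt_of_le ?_ pt_dist_ge_x
    rcases Nat.lt_or_ge m k with hmk | hmk
    · have hgap := xp_gap ht0 hmk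
      rw [abs_of_nonneg (by nlinarith [rr_pos ht0 m, rr_pos ht0 k])]
      nlinarith [rr_pos ht0 k]
    · have hmk' : k < m := by omega
      have hgap := xp_gap ht0 hmk'
      rw [abs_of_nonpos (by nlinarith [rr_pos ht0 m, rr_pos ht0 k])]
      nlinarith [rr_pos ht0 k, rr_pos ht0 m]


set_option maxHeartbeats 1000000 in
/-- For `d ≥ 3`, every finite graph is the intersection graph of a family of
`(1+ε)`-fat compact connected bodies in `ℝ^d`. -/
theorem any_graph_fat_non_convex (d : ℕ) (hd : 3 ≤ d) (ε : ℝ) (hε : 0 < ε)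
    (V : Type) [Fintype V] (G : SimpleGraph V) :
    ∃ S : V → Set (EuclideanSpace ℝ (Fin d)),
      (∀ i, IsCompact (S i) ∧ IsConnected (S i) ∧ IsFat d (1 + ε) (S i)) ∧
      Nonempty (interGraph S ≃g G) := by
  classical
  set n := Fintype.card V with hn
  set idx : V → ℕ := fun v => ((Fintype.equivFin V) v : ℕ) with hidx
  have idx_lt : ∀ v, idx v < n := fun v => ((Fintype.equivFin V) v).isLt
  have idx_inj : Function.Injective idx := by
    intro a b h
    exact (Fintype.equivFin V).injective (Fin.ext h)
  set t : ℝ := min ε 1 / 12 with htdef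
  have ht0 : 0 < t := by positivity
  have ht12 : t ≤ 1/12 := by
    rw [htdef]
    have : min ε 1 ≤ 1 := min_le_right _ _
    linarith
  have h7t : 7 * t ≤ ε := by
    have h1 : min ε 1 ≤ ε := min_le_left _ _
    rw [htdef]; linarith
  -- the y-lanes
  set yv : V → V → ℝ := fun v w => t^n * (n * idx v + idx w + 1) / (n^2 + 1) with hyv
  have hy_pos : ∀ v w, 0 < yv v w := by
    intro v w
    have : (0:ℝ) < (n * idx v + idx w + 1 : ℕ) := by positivity
    rw [hyv]
    positivity
  have hy_le : ∀ v w, yv v w ≤ t^n := by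
    intro v w
    rw [hyv]
    rw [div_le_iff₀ (by positivity)]
    have h1 : ((n * idx v + idx w + 1 : ℕ) : ℝ) ≤ (n^2 + 1 : ℝ) := by
      have hv := idx_lt v
      have hw := idx_lt w
      have : n * idx v + idx w + 1 ≤ n^2 + 1 := by nlinarith
      calc ((n * idx v + idx w + 1 : ℕ) : ℝ) ≤ ((n^2 + 1 : ℕ) : ℝ) := by exact_mod_cast this
        _ = (n:ℝ)^2 + 1 := by push_cast; ring
    push_cast at h1
    nlinarith [pow_pos ht0 n]
  have hy_inj : ∀ v w v' w', v ≠ v' → yv v w ≠ yv v' w' := by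
    intro v w v' w' hne heq
    have hNN : n * idx v + idx w + 1 = n * idx v' + idx w' + 1 := by
      have hpos : (0:ℝ) < (n:ℝ)^2 + 1 := by positivity
      have htn : (0:ℝ) < t^n := pow_pos ht0 n
      rw [hyv] at heq
      simp only [div_eq_div_iff hpos.ne' hpos.ne'] at heq
      have heq2 := mul_right_cancel₀ hpos.ne' heq
      have heq3 := mul_left_cancel₀ htn.ne' heq2
      have : ((n * idx v + idx w + 1 : ℕ) : ℝ) = ((n * idx v' + idx w' + 1 : ℕ) : ℝ) := by
        push_cast
        linarith
      exact_mod_cast this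
    have hvv' : idx v ≠ idx v' := fun h => hne (idx_inj h)
    have hw1 := idx_lt w
    have hw2 := idx_lt w'
    rcases Nat.lt_or_ge (idx v) (idx v') with h | h
    · nlinarith [Nat.mul_le_mul_left n (Nat.succ_le_of_lt h)]
    · have h' : idx v' < idx v := by omega
      nlinarith [Nat.mul_le_mul_left n (Nat.succ_le_of_lt h')]
  -- bound : t^n ≤ rr t m for m < n
  have htn_le : ∀ m, m < n → t^n ≤ rr t m := by
    intro m hm
    exact pow_le_pow_of_le_one ht0.le (by linarith) (by omega)
  set cV : V → EuclideanSpace ℝ (Fin d) := fun v => ctr d hd t (idx v) with hcV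
  set RV : V → ℝ := fun v => rr t (idx v) with hRV
  set rel : V → V → Prop := fun v w => G.Adj v w ∧ idx v < idx w with hrel
  set TV : V → V → Set (EuclideanSpace ℝ (Fin d)) :=
    fun v w => ten d hd t (yv v w) (idx v) (idx w) with hTV
  set C : V → V → Set (EuclideanSpace ℝ (Fin d)) :=
    fun v w => Metric.closedBall (cV v) (RV v) ∪ (if rel v w then TV v w else ∅) with hC
  have hcp : ∀ a, cV a = pt d hd (xp t (idx a)) 0 0 := fun a => rfl
  have hyb : ∀ v w, rel v w → yv v w ≤ rr t (idx v + 1) := by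
    intro v w hr
    have h2 : idx v + 2 ≤ n := by have := idx_lt w; have := hr.2; omega
    calc yv v w ≤ t^n := hy_le v w
      _ ≤ t^(idx v + 2) := pow_le_pow_of_le_one ht0.le (by linarith) h2
      _ = rr t (idx v + 1) := rfl
  refine ⟨fun v => ⋃ w, C v w, ?_, ?_⟩
  · intro v
    have hRpos : 0 < RV v := rr_pos ht0 _
    have hball_sub : Metric.closedBall (cV v) (RV v) ⊆ ⋃ w, C v w :=
      fun p hp => Set.mem_iUnion.mpr ⟨v, Set.mem_union_left _ hp⟩
    refine ⟨?_, ?_, ?_⟩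
    · apply isCompact_iUnion
      intro w
      apply IsCompact.union (isCompact_closedBall _ _)
      split_ifs
      · exact ten_compact
      · exact isCompact_empty
    · constructor
      · exact ⟨cV v, hball_sub (mem_closedBall_self hRpos.le)⟩
      · show IsPreconnected (⋃ w, C v w)
        rw [← Set.sUnion_range]
        apply isPreconnected_sUnion (cV v)
        · rintro s ⟨w, rfl⟩
          exact Set.mem_union_left _ (mem_closedBall_self hRpos.le)
        · rintro s ⟨w, rfl⟩
          show IsPreconnected (C v w)
          by_cases hr : rel v w
          · show IsPreconnected (_ ∪ _)
            rw [if_pos hr]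
            exact ball_ten_preconnected ht0 ht12 hr.2 (hy_pos v w).le (hyb v w hr)
          · show IsPreconnected (_ ∪ _)
            rw [if_neg hr, Set.union_empty]
            exact (convex_closedBall _ _).isPreconnected
    · refine ⟨RV v, hRpos, ⟨cV v, hball_sub⟩, ⟨cV v, ?_⟩⟩
      intro p hp
      rw [mem_closedBall]
      rcases Set.mem_iUnion.mp hp with ⟨w, hw⟩
      rcases hw with hp1 | hp2
      · calc dist p (cV v) ≤ RV v := mem_closedBall.mp hp1
          _ ≤ (1+ε) * RV v := by nlinarith
      · by_cases hr : rel v w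
        · rw [if_pos hr] at hp2
          have h := ten_reach ht0 ht12 hr.2 (hy_pos v w).le (hyb v w hr) hp2
          calc dist p (cV v) ≤ rr t (idx v) * (1 + 7*t) := h
            _ ≤ (1+ε) * RV v := by
                have : 0 < rr t (idx v) := rr_pos ht0 _
                nlinarith
        · rw [if_neg hr] at hp2
          exact absurd hp2 (Set.notMem_empty p)
  · have hdecomp : ∀ (a : V) (p : EuclideanSpace ℝ (Fin d)), p ∈ ⋃ w, C a w →
        p ∈ Metric.closedBall (cV a) (RV a) ∨ ∃ u, rel a u ∧ p ∈ TV a u := by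
      intro a p hp
      rcases Set.mem_iUnion.mp hp with ⟨u, hu⟩
      rcases hu with h | h
      · exact Or.inl h
      · by_cases hr : rel a u
        · exact Or.inr ⟨u, hr, by rwa [if_pos hr] at h⟩
        · rw [if_neg hr] at h
          exact absurd h (Set.notMem_empty p)
    have hwit : ∀ a b : V, G.Adj a b → idx a < idx b →
        ((⋃ w, C a w) ∩ (⋃ w, C b w)).Nonempty := by
      intro a b hab hlt
      refine ⟨pt d hd (xp t (idx b)) (yv a b) 0, ?_, ?_⟩
      · refine Set.mem_iUnion.mpr ⟨b, ?_⟩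
        refine Set.mem_union_right _ ?_
        rw [if_pos (⟨hab, hlt⟩ : rel a b)]
        refine Set.mem_union_right _ ?_
        exact ⟨0, ⟨le_refl 0, by nlinarith [rr_pos ht0 (idx a + 1)]⟩, rfl⟩
      · refine Set.mem_iUnion.mpr ⟨b, Set.mem_union_left _ ?_⟩
        rw [mem_closedBall, hcp b]
        have h1 : dist (pt d hd (xp t (idx b)) (yv a b) 0) (pt d hd (xp t (idx b)) 0 0)
            ≤ |xp t (idx b) - xp t (idx b)| + |yv a b - 0| + |(0:ℝ) - 0| := pt_dist_le
        have h2 : |xp t (idx b) - xp t (idx b)| + |yv a b - 0| + |(0:ℝ) - 0| = yv a b := by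
          simp [abs_of_nonneg (hy_pos a b).le]
        calc dist (pt d hd (xp t (idx b)) (yv a b) 0) (pt d hd (xp t (idx b)) 0 0)
            ≤ yv a b := by rw [h2] at h1; exact h1
          _ ≤ t^n := hy_le a b
          _ ≤ rr t (idx b) := htn_le _ (idx_lt b)
    refine ⟨⟨Equiv.refl V, ?_⟩⟩
    intro a b
    show G.Adj a b ↔ (interGraph _).Adj a b
    constructor
    · intro hab
      refine ⟨G.ne_of_adj hab, ?_⟩
      rcases lt_trichotomy (idx a) (idx b) with h | h | h
      · exact hwit a b hab h
      · exact absurd (idx_inj h) (G.ne_of_adj hab)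
      · rcases hwit b a hab.symm h with ⟨q, hq1, hq2⟩
        exact ⟨q, hq2, hq1⟩
    · rintro ⟨hne, p, hpa, hpb⟩
      by_contra hnadj
      have hballten : ∀ x z u : V, rel z u → x ≠ z → x ≠ u →
          p ∈ Metric.closedBall (cV x) (RV x) → p ∈ TV z u → False := by
        intro x z u hr hxz hxu hpx hpzu
        have h1 := ten_avoid (m := idx x) ht0 ht12 hr.2
          (fun h => hxz (idx_inj h)) (fun h => hxu (idx_inj h)) hpzu
        have h2 : dist p (cV x) ≤ RV x := mem_closedBall.mp hpx
        rw [hcp x] at h2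
        exact absurd h2 (not_le.mpr h1)
      rcases hdecomp a p hpa with hpa' | ⟨u, hru, hpa'⟩ <;>
        rcases hdecomp b p hpb with hpb' | ⟨u', hru', hpb'⟩
      · -- ball/ball
        have hij : idx a ≠ idx b := fun h => hne (idx_inj h)
        have htri : dist (cV a) (cV b) ≤ RV a + RV b := by
          calc dist (cV a) (cV b) ≤ dist (cV a) p + dist p (cV b) := dist_triangle _ _ _
            _ ≤ RV a + RV b := by
                have h1 : dist p (cV a) ≤ RV a := mem_closedBall.mp hpa'
                have h2 : dist p (cV b) ≤ RV b := mem_closedBall.mp hpb'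
                rw [dist_comm (cV a) p]
                linarith
        have hcd : dist (cV a) (cV b) = |xp t (idx a) - xp t (idx b)| := ctr_dist
        rcases Nat.lt_or_ge (idx a) (idx b) with h | h
        · have hgap := xp_gap ht0 h
          rw [hcd, abs_of_nonpos (by nlinarith [rr_pos ht0 (idx a), rr_pos ht0 (idx b)])] at htri
          have := rr_pos ht0 (idx b)
          simp only [hRV] at htri
          nlinarith
        · have h' : idx b < idx a := by omega
          have hgap := xp_gap ht0 h'
          rw [hcd, abs_of_nonneg (by nlinarith [rr_pos ht0 (idx a), rr_pos ht0 (idx b)])] at htri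
          have := rr_pos ht0 (idx a)
          simp only [hRV] at htri
          nlinarith
      · -- ball a / tentacle of b
        refine hballten a b u' hru' hne ?_ hpa' hpb'
        intro h
        subst h
        exact hnadj hru'.1.symm
      · -- tentacle of a / ball b
        refine hballten b a u hru (Ne.symm hne) ?_ hpb' hpa'
        intro h
        subst h
        exact hnadj hru.1
      · -- tentacle / tentacle
        have h1 := ten_y hpa'
        have h2 := ten_y hpb'
        exact hy_inj a u b u' hne (h1 ▸ h2)
end
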